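/- Let A be a finite set with |A| = q ≥ 2 and let n ≥ 2. Every complete n-universal transformation f : A^m → A^m has size m ≥ 2n. -/

import Mathlib

/-- The instruction of `A^m` induced by the `i`-th coordinate function of `f`. -/
def instr {A : Type*} {m : ℕ} (f : (Fin m → A) → Fin m → A) (i : Fin m) :
    (Fin m → A) → Fin m → A :=
  fun x => Function.update x i (f x i)

/-- Apply a list of induced instructions of `f`, first element of the list first. -/
def applyInstrs {A : Type*} {m : ℕ} (f : (Fin m → A) → Fin m → A) :
    List (Fin m) → (Fin m → A) → Fin m → A
  | [], x => x
  | i :: l, x => applyInstrs f l (instr f i x)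

/-- Projection of `A^m` onto the first `n` coordinates. -/
def pr {A : Type*} {m n : ℕ} (hmn : n ≤ m) (x : Fin m → A) : Fin n → A :=
  fun i => x (Fin.castLE hmn i)

/-- `hs` witnesses that `f` sequentially simulates the sequence `gs`: the `k`-th
element of `hs` is a nonempty list of instruction indices expressing `h^(k) ∈ S_f`,
and for each `i` the composition `h^(1) ∘ ⋯ ∘ h^(i)` simulates `g^(i)`. -/
def SeqWitness {A : Type*} {m n : ℕ} (hmn : n ≤ m)
    (f : (Fin m → A) → Fin m → A)
    (gs : List ((Fin n → A) → Fin n → A))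
    (hs : List (List (Fin m))) : Prop :=
  hs.length = gs.length ∧ (∀ l ∈ hs, l ≠ []) ∧
    ∀ (i : ℕ) (hi : i < gs.length) (x : Fin m → A),
      gs.get ⟨i, hi⟩ (pr hmn x) = pr hmn (applyInstrs f ((hs.take (i + 1)).flatten) x)

theorem applyInstrs_append {A : Type*} {m : ℕ} (f : (Fin m → A) → Fin m → A)
    (l₁ l₂ : List (Fin m)) (x : Fin m → A) :
    applyInstrs f (l₁ ++ l₂) x = applyInstrs f l₂ (applyInstrs f l₁ x) := by
  induction l₁ generalizing x with
  | nil => rfl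
  | cons i l ih => simp [applyInstrs, ih]

/-- Every complete `n`-universal transformation of `A^m` has size `m ≥ 2n`. -/
theorem complete_universal_size_ge (q n m : ℕ) (hq : 2 ≤ q) (hn : 2 ≤ n) (hmn : n ≤ m)
    (A : Type*) [Fintype A] (hA : Fintype.card A = q)
    (f : (Fin m → A) → Fin m → A)
    (hf : ∀ gs : List ((Fin n → A) → Fin n → A), ∃ hs, SeqWitness hmn f gs hs) :
    2 * n ≤ m := by
  have hApos : 0 < Fintype.card A := by omega
  have ⟨a⟩ : Nonempty A := Fintype.card_pos_iff.mp hApos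
  -- the sequence: first a constant map, then the identity
  obtain ⟨hs, hlen, -, hsim⟩ := hf [(fun _ _ => a), id]
  simp only [List.length_cons, List.length_nil] at hlen
  obtain ⟨l₁, l₂, rfl⟩ := List.length_eq_two.mp hlen
  have h0 := fun x => hsim 0 (by norm_num) x
  have h1 := fun x => hsim 1 (by norm_num) x
  simp only [List.get, List.take, List.flatten, List.append_eq, List.append_nil, id] at h0 h1
  -- extend v : A^n to A^m by filling with a
  set ext : (Fin n → A) → Fin m → A :=
    fun v i => if h : i.val < n then v ⟨i.val, h⟩ else a with hext
  have hprext : ∀ v, pr hmn (ext v) = v := by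
    intro v; funext i
    simp [pr, hext, i.isLt]
  -- the encoding into the last m - n coordinates
  set T : (Fin n → A) → Fin (m - n) → A :=
    fun v j => applyInstrs f l₁ (ext v) ⟨n + j.val, by omega⟩ with hT
  have hTinj : Function.Injective T := by
    intro v v' hvv'
    have hy : applyInstrs f l₁ (ext v) = applyInstrs f l₁ (ext v') := by
      funext i
      by_cases h : i.val < n
      · have e1 := congrFun (h0 (ext v)).symm ⟨i.val, h⟩
        have e2 := congrFun (h0 (ext v')).symm ⟨i.val, h⟩
        simp only [pr] at e1 e2
        have hcast : Fin.castLE hmn ⟨i.val, h⟩ = i := by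
          apply Fin.ext; rfl
        rw [hcast] at e1 e2
        rw [e1, e2]
      · have hj : i.val - n < m - n := by omega
        have := congrFun hvv' ⟨i.val - n, hj⟩
        simp only [hT] at this
        have hci : (⟨n + (i.val - n), by omega⟩ : Fin m) = i := by
          apply Fin.ext; simp; omega
        rwa [hci] at this
    have e1 := h1 (ext v)
    have e2 := h1 (ext v')
    rw [hprext, applyInstrs_append] at e1 e2
    rw [e1, e2, hy]
  have hcard := Fintype.card_le_of_injective T hTinj
  simp only [Fintype.card_fun, Fintype.card_fin, hA] at hcard
  have := (Nat.pow_le_pow_iff_right (by omega : 1 < q)).mp hcard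
  omega
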